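/- Let G be the Kagome lattice graph: vertex set V = (2ℤw₁+2ℤw₂) ∪ (w₁+2ℤw₁+2ℤw₂) ∪ (w₂+2ℤw₁+2ℤw₂) ⊂ ℂ with w₁ = 1, w₂ = e^{iπ/3}, and edges between v₁, v₂ with |v₁ - v₂| = 1. For any hexagon H with vertices {w₀ + e^{kπi/3} : k = 0,…,5}, the function F_H(v) = (-1)^k if v = w₀ + e^{kπi/3} and 0 otherwise satisfies the eigenvalue equation Δ_comb F_H = (3/2) F_H, where (Δ_comb F)(v) = (1/deg v) Σ_{w∼v} (F(v) - F(w)). -/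

import Mathlib

open Complex

/-- `w₁ = 1`. -/
noncomputable def kagomeW₁ : ℂ := 1

/-- `w₂ = e^{iπ/3}`. -/
noncomputable def kagomeW₂ : ℂ := Complex.exp (Real.pi * Complex.I / 3)

lemma kw2 : kagomeW₂ = ⟨1/2, Real.sqrt 3 / 2⟩ := by
  have h : (Real.pi : ℂ) * Complex.I / 3 = (Real.pi/3 : ℝ) * Complex.I := by
    push_cast; ring
  rw [kagomeW₂, h, Complex.exp_mul_I]
  rw [← Complex.ofReal_cos, ← Complex.ofReal_sin, Real.cos_pi_div_three, Real.sin_pi_div_three]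
  apply Complex.ext <;> simp

noncomputable def kE (p : ℤ × ℤ) : ℂ := (p.1 : ℂ) + (p.2 : ℂ) * kagomeW₂

lemma kE_re (p : ℤ × ℤ) : (kE p).re = p.1 + p.2 * (1/2) := by
  simp [kE, kw2, Complex.add_re, Complex.mul_re]

lemma kE_im (p : ℤ × ℤ) : (kE p).im = p.2 * (Real.sqrt 3 / 2) := by
  simp [kE, kw2, Complex.add_im, Complex.mul_im]

lemma kE_inj : Function.Injective kE := by
  intro p q h
  have h3 : Real.sqrt 3 ≠ 0 := by positivity
  have him : (kE p).im = (kE q).im := by rw [h]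
  rw [kE_im, kE_im] at him
  have h32 : Real.sqrt 3 / 2 ≠ 0 := by positivity
  have h2r : (p.2:ℝ) = q.2 := mul_right_cancel₀ h32 him
  have h2 : p.2 = q.2 := Int.cast_injective h2r
  have hre : (kE p).re = (kE q).re := by rw [h]
  rw [kE_re, kE_re] at hre
  rw [h2] at hre
  have h1 : (p.1 : ℝ) = q.1 := by linarith
  ext
  · exact_mod_cast h1
  · exact h2

lemma kE_sub (p q : ℤ × ℤ) : kE p - kE q = kE (p - q) := by
  simp [kE]; push_cast; ring

lemma kE_add (p q : ℤ × ℤ) : kE p + kE q = kE (p + q) := by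
  simp [kE]; push_cast; ring

lemma kE_normSq (p : ℤ × ℤ) :
    Complex.normSq (kE p) = ((p.1^2 + p.1*p.2 + p.2^2 : ℤ) : ℝ) := by
  rw [Complex.normSq_apply, kE_re, kE_im]
  have h3 : Real.sqrt 3 ^ 2 = 3 := Real.sq_sqrt (by norm_num)
  push_cast
  nlinarith [h3]

def kDirs : Finset (ℤ × ℤ) := {(1,0),(-1,0),(0,1),(0,-1),(1,-1),(-1,1)}

lemma quad_form_one (p : ℤ × ℤ) : p.1^2 + p.1*p.2 + p.2^2 = 1 ↔ p ∈ kDirs := by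
  obtain ⟨a, b⟩ := p
  simp only [kDirs, Finset.mem_insert, Finset.mem_singleton, Prod.mk.injEq]
  constructor
  · intro h
    have hb : b^2 ≤ 1 := by nlinarith
    have ha : a^2 ≤ 1 := by nlinarith
    have hb1 : -1 ≤ b := by nlinarith
    have hb2 : b ≤ 1 := by nlinarith
    have ha1 : -1 ≤ a := by nlinarith
    have ha2 : a ≤ 1 := by nlinarith
    interval_cases a <;> interval_cases b <;> omega
  · rintro (⟨rfl, rfl⟩|⟨rfl, rfl⟩|⟨rfl, rfl⟩|⟨rfl, rfl⟩|⟨rfl, rfl⟩|⟨rfl, rfl⟩) <;> ring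

lemma kE_abs_one (p : ℤ × ℤ) : ‖kE p‖ = 1 ↔ p ∈ kDirs := by
  rw [← quad_form_one]
  have hn := kE_normSq p
  constructor
  · intro h
    have h2 : Complex.normSq (kE p) = 1 := by
      rw [← Complex.sq_norm, h]; norm_num
    rw [h2] at hn
    exact_mod_cast hn.symm
  · intro h
    rw [h] at hn
    have h2 : ‖kE p‖ ^ 2 = 1 := by rw [Complex.sq_norm, hn]; norm_num
    nlinarith [norm_nonneg (kE p)]


/-- The vertex set of the Kagome lattice:
`V = (2ℤw₁+2ℤw₂) ∪ (w₁+2ℤw₁+2ℤw₂) ∪ (w₂+2ℤw₁+2ℤw₂) ⊂ ℂ`. -/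
def kagomeV : Set ℂ :=
  {v | ∃ m n : ℤ,
      v = 2 * (m : ℂ) * kagomeW₁ + 2 * (n : ℂ) * kagomeW₂ ∨
      v = kagomeW₁ + 2 * (m : ℂ) * kagomeW₁ + 2 * (n : ℂ) * kagomeW₂ ∨
      v = kagomeW₂ + 2 * (m : ℂ) * kagomeW₁ + 2 * (n : ℂ) * kagomeW₂}

lemma mem_kagomeV (v : ℂ) :
    v ∈ kagomeV ↔ ∃ p : ℤ × ℤ, (p.1 % 2 = 0 ∨ p.2 % 2 = 0) ∧ v = kE p := by
  constructor
  · rintro ⟨m, n, h | h | h⟩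
    · exact ⟨(2*m, 2*n), by omega, by rw [h]; simp only [kE, kagomeW₁]; push_cast; ring⟩
    · exact ⟨(2*m+1, 2*n), by omega, by rw [h]; simp only [kE, kagomeW₁]; push_cast; ring⟩
    · exact ⟨(2*m, 2*n+1), by omega, by rw [h]; simp only [kE, kagomeW₁]; push_cast; ring⟩
  · rintro ⟨⟨a, b⟩, hpar, rfl⟩
    rcases Int.even_or_odd a with ⟨m, rfl⟩ | ⟨m, rfl⟩ <;>
      rcases Int.even_or_odd b with ⟨n, rfl⟩ | ⟨n, rfl⟩
    · exact ⟨m, n, Or.inl (by simp only [kE, kagomeW₁]; push_cast; ring)⟩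
    · exact ⟨m, n, Or.inr (Or.inr (by simp only [kE, kagomeW₁]; push_cast; ring))⟩
    · exact ⟨m, n, Or.inr (Or.inl (by simp only [kE, kagomeW₁]; push_cast; ring))⟩
    · omega

lemma w2_sq : kagomeW₂ ^ 2 = kagomeW₂ - 1 := by
  have h3 : Real.sqrt 3 * Real.sqrt 3 = 3 := Real.mul_self_sqrt (by norm_num)
  apply Complex.ext <;>
    simp [kw2, pow_two, Complex.mul_re, Complex.mul_im, Complex.sub_re, Complex.sub_im] <;>
    nlinarith [h3]

def hexU : Fin 6 → ℤ × ℤ := ![(1,0),(0,1),(-1,1),(-1,0),(0,-1),(1,-1)]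

lemma w2_pow (k : Fin 6) : kagomeW₂ ^ (k : ℕ) = kE (hexU k) := by
  have h := w2_sq
  fin_cases k
  · show kagomeW₂ ^ 0 = kE (1, 0)
    simp [kE]
  · show kagomeW₂ ^ 1 = kE (0, 1)
    simp [kE]
  · show kagomeW₂ ^ 2 = kE (-1, 1)
    simp [kE]; push_cast; linear_combination h
  · show kagomeW₂ ^ 3 = kE (-1, 0)
    simp [kE]; push_cast; linear_combination (kagomeW₂ + 1) * h
  · show kagomeW₂ ^ 4 = kE (0, -1)
    simp [kE]; push_cast; linear_combination (kagomeW₂ ^ 2 + kagomeW₂) * h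
  · show kagomeW₂ ^ 5 = kE (1, -1)
    simp [kE]; push_cast; linear_combination (kagomeW₂ ^ 3 + kagomeW₂ ^ 2 - 1) * h

lemma expEq (k : Fin 6) :
    Complex.exp (((k : ℕ) : ℂ) * Real.pi * Complex.I / 3) = kE (hexU k) := by
  rw [show (((k : ℕ) : ℂ) * Real.pi * Complex.I / 3)
      = (k : ℕ) * (Real.pi * Complex.I / 3) by ring,
    Complex.exp_nat_mul, ← kagomeW₂, w2_pow]

noncomputable def gfun (q : ℤ × ℤ) : ℝ :=
  if q = (1,0) then 1 else if q = (0,1) then -1 else if q = (-1,1) then 1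
  else if q = (-1,0) then -1 else if q = (0,-1) then 1 else if q = (1,-1) then -1 else 0

lemma gfun_zero {q : ℤ × ℤ} (h : q ∉ kDirs) : gfun q = 0 := by
  simp only [kDirs, Finset.mem_insert, Finset.mem_singleton, not_or] at h
  obtain ⟨h1, h2, h3, h4, h5, h6⟩ := h
  simp [gfun, h1, h2, h3, h4, h5, h6]

lemma gfun_hexU (k : Fin 6) : gfun (hexU k) = (-1 : ℝ) ^ (k : ℕ) := by
  fin_cases k <;> norm_num [gfun, hexU]

def hexT : Finset (ℤ × ℤ) :=
  {(-2, 0), (-2, 1), (-2, 2), (-1, -1), (-1, 0), (-1, 1), (-1, 2), (0, -2), (0, -1),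
   (0, 0), (0, 1), (0, 2), (1, -2), (1, -1), (1, 0), (1, 1), (2, -2), (2, -1), (2, 0)}

lemma kDirs_sub_mem : ∀ u ∈ kDirs, ∀ d ∈ kDirs, u - d ∈ hexT := by
  intro u hu d hd
  fin_cases hu <;> fin_cases hd <;> decide

lemma kDirs_mem_T : ∀ u ∈ kDirs, u ∈ hexT := by
  intro u hu; fin_cases hu <;> decide

lemma key_sum (q : ℤ × ℤ) (hq : q.1 % 2 ≠ 0 ∨ q.2 % 2 ≠ 0) :
    ∑ d ∈ kDirs.filter (fun d => (q.1 + d.1) % 2 ≠ 0 ∨ (q.2 + d.2) % 2 ≠ 0),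
      (gfun q - gfun (q + d)) = 6 * gfun q := by
  by_cases hT : q ∈ hexT
  · fin_cases hT <;>
      first
        | (exfalso; omega)
        | (rw [Finset.sum_filter]; norm_num [kDirs, gfun, Finset.sum_insert, Prod.ext_iff])
  · have h0 : gfun q = 0 := gfun_zero (fun h => hT (kDirs_mem_T q h))
    rw [h0, mul_zero]
    apply Finset.sum_eq_zero
    intro d hd
    have hd' : d ∈ kDirs := (Finset.mem_filter.mp hd).1
    have h1 : gfun (q + d) = 0 := by
      apply gfun_zero
      intro hmem
      exact hT (by simpa using kDirs_sub_mem _ hmem _ hd')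
    simp [h0, h1]


/-- Adjacency in the Kagome lattice: two vertices at Euclidean distance `1`. -/
def kagomeAdj (v w : ℂ) : Prop :=
  v ∈ kagomeV ∧ w ∈ kagomeV ∧ ‖v - w‖ = 1

/-- The combinatorial (normalized) Laplacian of the Kagome lattice:
`(Δ F)(v) = (1/deg v) ∑_{w∼v} (F(v) - F(w))`, where every vertex has degree `4`.
(The sum over the finitely many neighbours is expressed as a `tsum`.) -/
noncomputable def kagomeLap (F : ℂ → ℝ) (v : ℂ) : ℝ :=
  (1 / 4) * ∑' w : {w : ℂ // kagomeAdj v w}, (F v - F (w : ℂ))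

/-- `w₀` is the centre of a hexagon of the Kagome lattice: its six prospective vertices
`w₀ + e^{kπi/3}`, `k = 0,…,5`, all belong to the lattice. -/
def IsHexCenter (w₀ : ℂ) : Prop :=
  ∀ k : Fin 6, w₀ + Complex.exp (((k : ℕ) : ℂ) * Real.pi * Complex.I / 3) ∈ kagomeV

/-- The alternating `±1` function supported on the vertices of the hexagon with centre `w₀`:
`F_H(v) = (-1)^k` if `v = w₀ + e^{kπi/3}` and `0` otherwise. -/
noncomputable def hexFun (w₀ : ℂ) : ℂ → ℝ := fun v =>
  if h : ∃ k : Fin 6, v = w₀ + Complex.exp (((k : ℕ) : ℂ) * Real.pi * Complex.I / 3) then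
    (-1 : ℝ) ^ ((h.choose : ℕ)) else 0

lemma kDirs_eq_range : ∀ u ∈ kDirs, ∃ k : Fin 6, u = hexU k := by
  intro u hu
  fin_cases hu
  exacts [⟨0, rfl⟩, ⟨3, rfl⟩, ⟨1, rfl⟩, ⟨4, rfl⟩, ⟨5, rfl⟩, ⟨2, rfl⟩]

lemma hexFun_apply (w₀ : ℂ) (c : ℤ × ℤ) (hc : w₀ = kE c) (p : ℤ × ℤ) :
    hexFun w₀ (kE p) = gfun (p - c) := by
  unfold hexFun
  split
  · next h =>
    obtain ⟨j, hj⟩ : ∃ j : Fin 6, h.choose = j := ⟨_, rfl⟩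
    have hk : kE p = kE (c + hexU j) := by
      rw [← kE_add, ← hc, ← expEq]
      rw [← hj]
      exact h.choose_spec
    rw [hj]
    have hp : p = c + hexU j := kE_inj hk
    subst hp
    rw [add_sub_cancel_left, gfun_hexU]
  · next h =>
    refine (gfun_zero fun hmem => h ?_).symm
    obtain ⟨k, hk⟩ := kDirs_eq_range _ hmem
    refine ⟨k, ?_⟩
    rw [expEq, hc, kE_add]
    congr 1
    rw [← hk]
    abel

lemma kDirs_neg : ∀ d ∈ kDirs, -d ∈ kDirs := by
  intro d hd; fin_cases hd <;> decide

lemma par_of_mem (q : ℤ × ℤ) (h : kE q ∈ kagomeV) : q.1 % 2 = 0 ∨ q.2 % 2 = 0 := by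
  rw [mem_kagomeV] at h
  obtain ⟨p', hp', he⟩ := h
  obtain rfl := kE_inj he
  exact hp'

lemma hexCenter (w₀ : ℂ) (hw₀ : IsHexCenter w₀) :
    ∃ c : ℤ × ℤ, w₀ = kE c ∧ c.1 % 2 = 1 ∧ c.2 % 2 = 1 := by
  have h0 := hw₀ 0
  have h1 := hw₀ 1
  have h2 := hw₀ 2
  rw [expEq 0, show hexU 0 = (1,0) from rfl] at h0
  rw [expEq 1, show hexU 1 = (0,1) from rfl] at h1
  rw [expEq 2, show hexU 2 = (-1,1) from rfl] at h2
  obtain ⟨p₀, _, he⟩ := (mem_kagomeV _).mp h0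
  have hc : w₀ = kE (p₀ - (1,0)) := by
    rw [← kE_sub, ← he]; ring
  set c : ℤ × ℤ := p₀ - (1,0) with hcdef
  have g0 : (c.1 + 1) % 2 = 0 ∨ (c.2 + 0) % 2 = 0 := by
    have hm : kE (c + (1,0)) ∈ kagomeV := by rw [← kE_add, ← hc]; exact h0
    simpa using par_of_mem _ hm
  have g1 : (c.1 + 0) % 2 = 0 ∨ (c.2 + 1) % 2 = 0 := by
    have hm : kE (c + (0,1)) ∈ kagomeV := by rw [← kE_add, ← hc]; exact h1
    simpa using par_of_mem _ hm
  have g2 : (c.1 + -1) % 2 = 0 ∨ (c.2 + 1) % 2 = 0 := by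
    have hm : kE (c + (-1,1)) ∈ kagomeV := by rw [← kE_add, ← hc]; exact h2
    simpa using par_of_mem _ hm
  exact ⟨c, hc, by omega, by omega⟩

open scoped Classical in
lemma adj_iff (p : ℤ × ℤ) (hp : p.1 % 2 = 0 ∨ p.2 % 2 = 0) (w : ℂ) :
    kagomeAdj (kE p) w ↔
      w ∈ (kDirs.filter (fun d => (p.1 + d.1) % 2 = 0 ∨ (p.2 + d.2) % 2 = 0)).image
        (fun d => kE (p + d)) := by
  constructor
  · rintro ⟨hv, hw, habs⟩
    rw [mem_kagomeV] at hw
    obtain ⟨q, hq, rfl⟩ := hw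
    rw [kE_sub, kE_abs_one] at habs
    refine Finset.mem_image.mpr ⟨q - p, Finset.mem_filter.mpr ⟨?_, ?_⟩, ?_⟩
    · simpa [neg_sub] using kDirs_neg _ habs
    · simp only [Prod.fst_sub, Prod.snd_sub]
      omega
    · congr 1
      abel
  · intro hw
    obtain ⟨d, hd, rfl⟩ := Finset.mem_image.mp hw
    obtain ⟨hdk, hdpar⟩ := Finset.mem_filter.mp hd
    refine ⟨(mem_kagomeV _).mpr ⟨p, hp, rfl⟩,
      (mem_kagomeV _).mpr ⟨p + d, by simpa using hdpar, rfl⟩, ?_⟩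
    rw [kE_sub, show p - (p + d) = -d by abel, kE_abs_one]
    exact kDirs_neg _ hdk


/-- For any hexagon `H` of the Kagome lattice with vertices
`{w₀ + e^{kπi/3} : k = 0,…,5}`, the alternating function `F_H` satisfies
`Δ_comb F_H = (3/2) F_H` (at every vertex of the lattice). -/
theorem hexFun_is_eigenfunction (w₀ : ℂ) (hw₀ : IsHexCenter w₀) :
    ∀ v ∈ kagomeV, kagomeLap (hexFun w₀) v = (3 / 2) * hexFun w₀ v := by
  classical
  intro v hv
  obtain ⟨c, hc, hc1, hc2⟩ := hexCenter w₀ hw₀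
  rw [mem_kagomeV] at hv
  obtain ⟨p, hp, rfl⟩ := hv
  set F := hexFun w₀ with hF
  set s : Finset (ℤ × ℤ) :=
    kDirs.filter (fun d => (p.1 + d.1) % 2 = 0 ∨ (p.2 + d.2) % 2 = 0) with hs
  set t : Finset ℂ := s.image (fun d => kE (p + d)) with ht
  have hadj : ∀ w : ℂ, kagomeAdj (kE p) w ↔ w ∈ t := fun w => adj_iff p hp w
  have e1 : (∑' w : {w : ℂ // kagomeAdj (kE p) w}, (F (kE p) - F ↑w))
      = ∑' w : {w : ℂ // w ∈ t}, (F (kE p) - F ↑w) :=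
    Equiv.tsum_eq (Equiv.subtypeEquivRight hadj) (fun w : {w : ℂ // w ∈ t} => F (kE p) - F ↑w)
  have e2 : (∑' w : {w : ℂ // w ∈ t}, (F (kE p) - F ↑w)) = ∑ w ∈ t, (F (kE p) - F w) :=
    Finset.tsum_subtype t (fun w => F (kE p) - F w)
  have e3 : ∑ w ∈ t, (F (kE p) - F w) = ∑ d ∈ s, (F (kE p) - F (kE (p + d))) := by
    rw [ht]
    apply Finset.sum_image
    intro x _ y _ hxy
    have h := kE_inj hxy
    exact add_left_cancel h
  have e5 : F (kE p) = gfun (p - c) := hexFun_apply w₀ c hc p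
  have e4 : ∀ d : ℤ × ℤ, F (kE (p + d)) = gfun ((p - c) + d) := by
    intro d
    rw [hF, hexFun_apply w₀ c hc]
    congr 1
    abel
  have e6 : s = kDirs.filter
      (fun d => ((p - c).1 + d.1) % 2 ≠ 0 ∨ ((p - c).2 + d.2) % 2 ≠ 0) := by
    rw [hs]
    apply Finset.filter_congr
    intro d _
    simp only [Prod.fst_sub, Prod.snd_sub]
    constructor <;> intro h' <;> omega
  have e7 := key_sum (p - c) (by simp only [Prod.fst_sub, Prod.snd_sub]; omega)
  have main : ∑ d ∈ s, (F (kE p) - F (kE (p + d))) = 6 * gfun (p - c) := by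
    calc ∑ d ∈ s, (F (kE p) - F (kE (p + d)))
        = ∑ d ∈ s, (gfun (p - c) - gfun ((p - c) + d)) :=
          Finset.sum_congr rfl (fun d _ => by rw [e5, e4])
      _ = 6 * gfun (p - c) := by rw [e6]; exact e7
  show (1 / 4 : ℝ) * _ = _
  rw [e1, e2, e3, main, e5]
  ring
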